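/- Let U ⊂ ℝ^n be open and bounded, satisfying the cone condition, or U = ℝ^n. For x ∈ U, r ∈ (0, diam U) and α ∈ (0,1), set W^x_{r,α} = {(w₁,…,w_n) ∈ (B(0,r))^n : x + wᵢ ∈ U for all i, and |w₁ ∧ … ∧ w_n| ≥ α·r^n}. Then there exist α̃ ∈ (0,1) and C = C(n,U) > 0 such that for all x ∈ U and all r ∈ (0, diam U), H^{n²}(W^x_{r,α̃}) ≥ C·r^{n²}. -/

import Mathlib

open MeasureTheory Metric Pointwise
open scoped RealInnerProductSpace

/-- The open cone with vertex `0`, unit axis direction `u`, aperture `a` and height `h`. -/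
def coneSet {n : ℕ} (u : EuclideanSpace ℝ (Fin n)) (a h : ℝ) :
    Set (EuclideanSpace ℝ (Fin n)) :=
  {x | 0 < ⟪x, u⟫ ∧ ⟪x, u⟫ < h ∧ ‖x - ⟪x, u⟫ • u‖ < a * ⟪x, u⟫}

/-- The cone condition: the boundary of `U` is covered by finitely many bounded open
sets `V i`, and attaching a rotated copy (axis `u i`) of a fixed cone `K_h` to any point
of `U ∩ V i` stays inside `U`. -/
def ConeCondition {n : ℕ} (U : Set (EuclideanSpace ℝ (Fin n))) : Prop :=
  ∃ (a h : ℝ), 0 < a ∧ 0 < h ∧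
    ∃ (m : ℕ) (V : Fin m → Set (EuclideanSpace ℝ (Fin n)))
      (u : Fin m → EuclideanSpace ℝ (Fin n)),
      (∀ i, IsOpen (V i) ∧ Bornology.IsBounded (V i) ∧ ‖u i‖ = 1) ∧
      frontier U ⊆ ⋃ i, V i ∧
      ∀ i, (U ∩ V i) + coneSet (u i) a h ⊆ U

/-- `W^x_{r,α}`: tuples of `n` vectors `wᵢ` in the closed ball of radius `r` with
`x + wᵢ ∈ U` and `|w₁ ∧ … ∧ w_n| ≥ α·r^n`. -/
def WsetX {n : ℕ} (U : Set (EuclideanSpace ℝ (Fin n)))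
    (x : EuclideanSpace ℝ (Fin n)) (r α : ℝ) : Set (Fin n → EuclideanSpace ℝ (Fin n)) :=
  {w | (∀ i, w i ∈ Metric.closedBall (0 : EuclideanSpace ℝ (Fin n)) r ∧ x + w i ∈ U) ∧
    α * r ^ n ≤ |(Matrix.of fun i j => w j i).det|}

namespace VolWsetAux

variable {n : ℕ}



/-- The determinant as a multilinear map in the rows. -/
noncomputable def detML (n : ℕ) :
    MultilinearMap ℝ (fun _ : Fin n => EuclideanSpace ℝ (Fin n)) ℝ :=
  (Matrix.detRowAlternating (R := ℝ) (n := Fin n)).toMultilinearMap.compLinearMap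
    (fun _ => (WithLp.linearEquiv 2 ℝ (Fin n → ℝ)).toLinearMap)

lemma detML_apply (w : Fin n → EuclideanSpace ℝ (Fin n)) :
    detML n w = (Matrix.of fun i j => w i j).det := rfl

lemma abs_coord_le_norm (x : EuclideanSpace ℝ (Fin n)) (i : Fin n) : |x i| ≤ ‖x‖ := by
  have h := abs_real_inner_le_norm x (EuclideanSpace.single i (1:ℝ))
  rw [EuclideanSpace.norm_single] at h
  simpa [EuclideanSpace.inner_single_right] using h

lemma detML_bound (w : Fin n → EuclideanSpace ℝ (Fin n)) :
    ‖detML n w‖ ≤ (n.factorial : ℝ) * ∏ i, ‖w i‖ := by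
  have h0 : detML n w = (Matrix.of fun i j => w i j).det := rfl
  rw [h0, Matrix.det_apply']
  calc ‖∑ σ : Equiv.Perm (Fin n), (Equiv.Perm.sign σ : ℝ) * ∏ i, (Matrix.of fun i j => w i j) (σ i) i‖
      ≤ ∑ σ : Equiv.Perm (Fin n), ‖(Equiv.Perm.sign σ : ℝ) * ∏ i, (Matrix.of fun i j => w i j) (σ i) i‖ :=
        norm_sum_le _ _
    _ ≤ ∑ _σ : Equiv.Perm (Fin n), ∏ i, ‖w i‖ := by
        refine Finset.sum_le_sum fun σ _ => ?_
        rw [norm_mul]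
        have h1 : ‖((Equiv.Perm.sign σ : ℤ) : ℝ)‖ = 1 := by
          rcases Int.units_eq_one_or (Equiv.Perm.sign σ) with h | h <;> simp [h]
        rw [h1, one_mul]
        calc ‖∏ i, (Matrix.of fun i j => w i j) (σ i) i‖
            ≤ ∏ i, ‖w (σ i)‖ := by
              rw [norm_prod]
              refine Finset.prod_le_prod (fun _ _ => norm_nonneg _) fun i _ => ?_
              exact abs_coord_le_norm (w (σ i)) i
          _ = ∏ i, ‖w i‖ := Equiv.prod_comp σ (fun j => ‖w j‖)
    _ = (n.factorial : ℝ) * ∏ i, ‖w i‖ := by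
        rw [Finset.sum_const, Finset.card_univ, Fintype.card_perm]
        simp [nsmul_eq_mul]

noncomputable def detCMM (n : ℕ) :
    ContinuousMultilinearMap ℝ (fun _ : Fin n => EuclideanSpace ℝ (Fin n)) ℝ :=
  (detML n).mkContinuous (n.factorial : ℝ) detML_bound

lemma detCMM_apply (w : Fin n → EuclideanSpace ℝ (Fin n)) :
    detCMM n w = (Matrix.of fun i j => w i j).det := by
  rw [detCMM, MultilinearMap.coe_mkContinuous] ; rfl

lemma detCMM_norm_le : ‖detCMM n‖ ≤ (n.factorial : ℝ) :=
  MultilinearMap.mkContinuous_norm_le _ (Nat.cast_nonneg _) _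


lemma det_diag_add_const (d c : Fin n → ℝ) (hd : ∀ i, d i ≠ 0) :
    (Matrix.diagonal d + Matrix.replicateCol Unit (fun _ => (1:ℝ)) * Matrix.replicateRow Unit c).det
      = (∏ i, d i) * (1 + ∑ i, c i / d i) := by
  have hA : IsUnit (Matrix.diagonal d).det := by
    rw [Matrix.det_diagonal]
    exact isUnit_iff_ne_zero.2 (Finset.prod_ne_zero_iff.2 fun i _ => hd i)
  have hinv : (Matrix.diagonal d)⁻¹ = Matrix.diagonal (fun i => (d i)⁻¹) := by
    refine Matrix.inv_eq_right_inv ?_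
    rw [Matrix.diagonal_mul_diagonal]
    convert Matrix.diagonal_one using 2
    exact funext fun i => mul_inv_cancel₀ (hd i)
  rw [Matrix.det_add_replicateCol_mul_replicateRow hA, Matrix.det_diagonal, Matrix.det_unique]
  congr 1
  simp [Matrix.mul_apply, hinv, Matrix.replicateRow_apply, Matrix.replicateCol_apply,
    div_eq_mul_inv, Matrix.one_apply, Matrix.diagonal_apply,
    Finset.sum_ite_eq, mul_comm]

lemma exists_good_frame (t : ℝ) (ht : 0 < t) (c : EuclideanSpace ℝ (Fin n)) :
    ∃ m : Fin n → EuclideanSpace ℝ (Fin n), (∀ i, ‖m i - c‖ = t) ∧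
      t ^ n ≤ |(Matrix.of fun i j => m i j).det| := by
  classical
  set d : Fin n → ℝ := fun i => if 0 ≤ c i then t else -t with hdset
  have habs : ∀ i, |d i| = t := by
    intro i
    by_cases h : 0 ≤ c i <;> simp [hdset, h, abs_of_pos ht, abs_of_neg, ht]
  have hd : ∀ i, d i ≠ 0 := by
    intro i
    by_cases h : 0 ≤ c i <;> simp [hdset, h, ht.ne', ht.ne]
  refine ⟨fun i => c + d i • EuclideanSpace.single i 1, fun i => ?_, ?_⟩
  · rw [add_sub_cancel_left, norm_smul, EuclideanSpace.norm_single]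
    simp [habs i]
  · have hmat : (Matrix.of fun i j => (c + d i • EuclideanSpace.single i (1:ℝ)) j)
        = Matrix.diagonal d + Matrix.replicateCol Unit (fun _ => (1:ℝ)) * Matrix.replicateRow Unit (fun j => c j) := by
      ext i j
      simp only [Matrix.of_apply, PiLp.add_apply, PiLp.smul_apply, EuclideanSpace.single_apply,
        smul_eq_mul, Matrix.add_apply, Matrix.diagonal_apply, Matrix.mul_apply,
        Matrix.replicateCol_apply, Matrix.replicateRow_apply, Finset.univ_unique, Finset.sum_singleton, one_mul]
      by_cases h : i = j
      · subst h; simp [add_comm]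
      · simp [h, Ne.symm h]
    rw [hmat, det_diag_add_const _ _ hd, abs_mul]
    have h1 : |∏ i, d i| = t ^ n := by
      rw [Finset.abs_prod]
      rw [Finset.prod_congr rfl fun i _ => habs i, Finset.prod_const, Finset.card_univ,
        Fintype.card_fin]
    have h2 : (1:ℝ) ≤ |1 + ∑ i, c i / d i| := by
      have hnn : ∀ i ∈ Finset.univ, 0 ≤ c i / d i := by
        intro i _
        by_cases h : 0 ≤ c i
        · exact div_nonneg h (by simp [hdset, h, ht.le])
        · push_neg at h
          rw [hdset]
          simp only [not_le.2 h, if_false]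
          rw [div_neg, neg_nonneg]
          exact (div_nonpos_iff.2 (Or.inr ⟨h.le, ht.le⟩))
      have hs := Finset.sum_nonneg hnn
      rw [abs_of_nonneg (by linarith)]
      linarith
    calc t ^ n = t ^ n * 1 := (mul_one _).symm
      _ ≤ |∏ i, d i| * |1 + ∑ i, c i / d i| := by
          rw [h1]
          exact mul_le_mul_of_nonneg_left h2 (by positivity)

lemma cone_ball (u : EuclideanSpace ℝ (Fin n)) (hu : ‖u‖ = 1) {a h t : ℝ} (ha : 0 < a)
    (ht : 0 < t) (hth : t ≤ 2/5 * h) (e : EuclideanSpace ℝ (Fin n))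
    (he : ‖e‖ ≤ min a 1 * t / 4) : t • u + e ∈ coneSet u a h := by
  have huu : ⟪u, u⟫ = 1 := by
    rw [real_inner_self_eq_norm_sq, hu]; norm_num
  have hinner : ⟪t • u + e, u⟫ = t + ⟪e, u⟫ := by
    rw [inner_add_left, real_inner_smul_left, huu, mul_one]
  have habs : |⟪e, u⟫| ≤ t / 4 := by
    have h1 : |⟪e, u⟫| ≤ ‖e‖ * ‖u‖ := abs_real_inner_le_norm e u
    rw [hu, mul_one] at h1
    have h2 : min a 1 * t / 4 ≤ t / 4 := by
      have : min a 1 ≤ 1 := min_le_right _ _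
      nlinarith
    linarith
  have hlo : t - t/4 ≤ t + ⟪e, u⟫ := by
    have := abs_le.1 habs
    linarith [this.1]
  have hhi : t + ⟪e, u⟫ ≤ t + t/4 := by
    have := abs_le.1 habs
    linarith [this.2]
  refine ⟨by rw [hinner]; linarith, by rw [hinner]; linarith, ?_⟩
  rw [hinner]
  have horth : (t • u + e) - (t + ⟪e, u⟫) • u = e - ⟪e, u⟫ • u := by
    rw [add_smul]; abel
  rw [horth]
  have hnorm : ‖e - ⟪e, u⟫ • u‖ ≤ ‖e‖ := by
    have hsq : ‖e - ⟪e, u⟫ • u‖ ^ 2 = ‖e‖ ^ 2 - ⟪e, u⟫ ^ 2 := by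
      rw [norm_sub_sq_real, real_inner_smul_right, norm_smul]
      rw [hu, mul_one, Real.norm_eq_abs, sq_abs]
      ring
    nlinarith [norm_nonneg (e - ⟪e, u⟫ • u), norm_nonneg e, sq_nonneg ⟪e, u⟫]
  have h3 : min a 1 * t / 4 ≤ a * t / 4 := by
    have : min a 1 ≤ a := min_le_left _ _
    nlinarith
  have h4 : a * t / 4 < a * (t - t/4) := by nlinarith
  calc ‖e - ⟪e, u⟫ • u‖ ≤ ‖e‖ := hnorm
    _ ≤ min a 1 * t / 4 := he
    _ ≤ a * t / 4 := h3
    _ < a * (t - t/4) := h4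
    _ ≤ a * (t + ⟪e, u⟫) := by nlinarith

lemma geom (U : Set (EuclideanSpace ℝ (Fin n)))
    (hU : (IsOpen U ∧ Bornology.IsBounded U ∧ ConeCondition U) ∨ U = Set.univ) :
    ∃ c₀ : ℝ, 0 < c₀ ∧ c₀ ≤ 1/2 ∧ ∀ x ∈ U, ∀ r : ℝ, 0 < r →
      ENNReal.ofReal r < EMetric.diam U →
      ∃ y, closedBall y (c₀ * r) ⊆ U ∧ dist y x + c₀ * r ≤ r := by
  rcases hU with ⟨hopen, hbd, a, h, ha, hh, M, V, u, hV, hcover, hcone⟩ | rfl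
  · -- bounded case
    have hfr : IsCompact (frontier U) :=
      (hbd.isCompact_closure).of_isClosed_subset isClosed_frontier frontier_subset_closure
    obtain ⟨δ, hδ, hLeb⟩ := lebesgue_number_lemma_of_metric hfr (fun i => (hV i).1) hcover
    set D : ℝ := Metric.diam U with hD_def
    have hD0 : 0 ≤ D := Metric.diam_nonneg
    set c₁ : ℝ := min (δ / (D + 1)) 1 / 2 with hc₁_def
    set c₂ : ℝ := min a 1 * min 1 (h / (D + 1)) / 10 with hc₂_def
    have hc₁ : 0 < c₁ := by
      rw [hc₁_def]
      have : 0 < min (δ / (D+1)) 1 := lt_min (by positivity) one_pos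
      linarith
    have hc₂ : 0 < c₂ := by
      rw [hc₂_def]
      have h1 : 0 < min a 1 := lt_min ha one_pos
      have h2 : 0 < min 1 (h / (D+1)) := lt_min one_pos (by positivity)
      positivity
    refine ⟨min c₁ c₂, lt_min hc₁ hc₂, ?_, ?_⟩
    · have : c₁ ≤ 1/2 := by
        rw [hc₁_def]
        have : min (δ / (D+1)) 1 ≤ 1 := min_le_right _ _
        linarith
      exact le_trans (min_le_left _ _) this
    intro x hx r hr hrdiam
    set c₀ : ℝ := min c₁ c₂ with hc₀_def
    have hc₀ : 0 < c₀ := lt_min hc₁ hc₂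
    have hrD : r ≤ D := by
      have hne : EMetric.diam U ≠ ⊤ := hbd.ediam_ne_top
      have := (ENNReal.ofReal_lt_iff_lt_toReal hr.le hne).1 hrdiam
      exact this.le
    by_cases hcase : closedBall x (min δ r / 2) ⊆ U
    · refine ⟨x, ?_, ?_⟩
      · refine Set.Subset.trans (closedBall_subset_closedBall ?_) hcase
        have h1 : min (δ / (D+1)) 1 * r ≤ min δ r := by
          refine le_min ?_ ?_
          · calc min (δ / (D+1)) 1 * r ≤ (δ / (D+1)) * r :=
                mul_le_mul_of_nonneg_right (min_le_left _ _) hr.le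
              _ ≤ δ := by
                rw [div_mul_eq_mul_div, div_le_iff₀ (by linarith)]
                nlinarith
          · calc min (δ / (D+1)) 1 * r ≤ 1 * r :=
                mul_le_mul_of_nonneg_right (min_le_right _ _) hr.le
              _ = r := one_mul r
        have h2 : c₀ * r ≤ c₁ * r := mul_le_mul_of_nonneg_right (min_le_left _ _) hr.le
        rw [hc₁_def] at h2
        linarith
      · have h2 : c₀ * r ≤ c₁ * r := mul_le_mul_of_nonneg_right (min_le_left _ _) hr.le
        have hc₁half : c₁ ≤ 1/2 := by
          rw [hc₁_def]
          have : min (δ / (D+1)) 1 ≤ 1 := min_le_right _ _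
          linarith
        have : c₁ * r ≤ 1/2 * r := mul_le_mul_of_nonneg_right hc₁half hr.le
        rw [dist_self]
        linarith
    · -- near the boundary: use the cone
      rw [Set.not_subset] at hcase
      obtain ⟨p, hp, hpU⟩ := hcase
      have hUne : U ≠ Set.univ := fun hu => hpU (hu ▸ Set.mem_univ p)
      obtain ⟨q, hq, hqdist⟩ := exists_mem_frontier_infDist_compl_eq_dist hx hUne
      have hdq : dist x q ≤ min δ r / 2 := by
        rw [← hqdist]
        calc Metric.infDist x Uᶜ ≤ dist x p := Metric.infDist_le_dist_of_mem hpU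
          _ ≤ min δ r / 2 := by rw [dist_comm]; exact mem_closedBall.1 hp
      obtain ⟨i, hiV⟩ := hLeb q hq
      have hxV : x ∈ V i := hiV (by
        rw [mem_ball]
        have : min δ r / 2 ≤ δ / 2 := by
          have := min_le_left δ r
          linarith
        linarith)
      set t : ℝ := 2/5 * min r h with ht_def
      have hminrh : 0 < min r h := lt_min hr hh
      have ht : 0 < t := by rw [ht_def]; linarith
      refine ⟨x + t • u i, ?_, ?_⟩
      · intro z hz
        set e : EuclideanSpace ℝ (Fin n) := z - (x + t • u i) with he_def
        have hez : z = x + (t • u i + e) := by rw [he_def]; abel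
        have hcr : c₀ * r ≤ min a 1 * t / 4 := by
          have h1 : min 1 (h / (D+1)) * r ≤ min r h := by
            refine le_min ?_ ?_
            · calc min 1 (h / (D+1)) * r ≤ 1 * r :=
                  mul_le_mul_of_nonneg_right (min_le_left _ _) hr.le
                _ = r := one_mul r
            · calc min 1 (h / (D+1)) * r ≤ (h / (D+1)) * r :=
                  mul_le_mul_of_nonneg_right (min_le_right _ _) hr.le
                _ ≤ h := by
                  rw [div_mul_eq_mul_div, div_le_iff₀ (by linarith)]
                  nlinarith
          have h2 : c₀ * r ≤ c₂ * r := mul_le_mul_of_nonneg_right (min_le_right _ _) hr.le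
          have h3 : c₂ * r = min a 1 * (min 1 (h / (D+1)) * r) / 10 := by
            rw [hc₂_def]; ring
          have h4 : min a 1 * (min 1 (h / (D+1)) * r) / 10 ≤ min a 1 * min r h / 10 := by
            have h0 : (0:ℝ) ≤ min a 1 := le_min ha.le zero_le_one
            nlinarith
          have h5 : min a 1 * min r h / 10 = min a 1 * t / 4 := by
            rw [ht_def]; ring
          linarith
        have hee : ‖e‖ ≤ min a 1 * t / 4 := by
          have : dist z (x + t • u i) ≤ c₀ * r := mem_closedBall.1 hz
          rw [dist_eq_norm] at this
          rw [he_def]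
          linarith
        have hk : t • u i + e ∈ coneSet (u i) a h := by
          refine cone_ball (u i) (hV i).2.2 ha ht ?_ e hee
          rw [ht_def]
          have := min_le_right r h
          linarith
        rw [hez]
        exact hcone i (Set.add_mem_add ⟨hx, hxV⟩ hk)
      · have hdyx : dist (x + t • u i) x = t := by
          rw [dist_eq_norm, add_sub_cancel_left, norm_smul, (hV i).2.2, Real.norm_eq_abs,
            abs_of_pos ht, mul_one]
        rw [hdyx]
        have h1 : t ≤ 2/5 * r := by
          rw [ht_def]
          have := min_le_left r h
          linarith
        have h2 : c₀ * r ≤ 1/2 * r := by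
          have hc₁half : c₁ ≤ 1/2 := by
            rw [hc₁_def]
            have : min (δ / (D+1)) 1 ≤ 1 := min_le_right _ _
            linarith
          have : c₀ ≤ 1/2 := le_trans (min_le_left _ _) hc₁half
          nlinarith
        linarith
  · -- U = univ
    refine ⟨1/2, by norm_num, le_refl _, ?_⟩
    intro x hx r hr hrdiam
    refine ⟨x, fun z hz => Set.mem_univ z, ?_⟩
    rw [dist_self]
    linarith

set_option maxHeartbeats 1000000 in
lemma core (U : Set (EuclideanSpace ℝ (Fin n))) (c₀ : ℝ) (hc₀ : 0 < c₀) (hc₀' : c₀ ≤ 1/2) :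
    ∃ α' ∈ Set.Ioo (0:ℝ) 1, ∃ C : ℝ, 0 < C ∧
      ∀ (x y : EuclideanSpace ℝ (Fin n)) (r : ℝ), 0 < r →
        closedBall y (c₀ * r) ⊆ U → dist y x + c₀ * r ≤ r →
        ENNReal.ofReal (C * r ^ (n ^ 2)) ≤ volume (WsetX U x r α') := by
  classical
  set s : ℝ := c₀ / 2 with hs_def
  have hs : 0 < s := by positivity
  have hs4 : s ≤ 1/4 := by rw [hs_def]; linarith
  have hsn : 0 < s ^ n := pow_pos hs n
  have hsn1 : s ^ n ≤ 1 := pow_le_one₀ hs.le (by linarith)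
  set K : ℝ := (n.factorial : ℝ) with hK_def
  have hK0 : 0 ≤ K := Nat.cast_nonneg _
  set A : ℝ := K * n * 3 ^ (n - 1) with hA_def
  have hA0 : 0 ≤ A := by positivity
  set η : ℝ := min (s ^ n / (2 * (A + 1))) s with hη_def
  have hη : 0 < η := lt_min (by positivity) hs
  have hηs : η ≤ s := min_le_right _ _
  have hAη : A * η ≤ s ^ n / 2 := by
    have h1 : η ≤ s ^ n / (2 * (A + 1)) := min_le_left _ _
    have h2 : A * η ≤ A * (s ^ n / (2 * (A + 1))) := mul_le_mul_of_nonneg_left h1 hA0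
    have h3 : A * (s ^ n / (2 * (A + 1))) ≤ s ^ n / 2 := by
      rw [mul_div_assoc']
      rw [div_le_div_iff₀ (by positivity) (by norm_num : (0:ℝ) < 2)]
      nlinarith
    linarith
  set α' : ℝ := s ^ n / 2 with hα'_def
  set B : ℝ := (volume (ball (0 : EuclideanSpace ℝ (Fin n)) 1)).toReal with hB_def
  have hBpos : 0 < B := ENNReal.toReal_pos (measure_ball_pos _ _ one_pos).ne' measure_ball_lt_top.ne
  set C : ℝ := (η ^ n * B) ^ n with hC_def
  refine ⟨α', ⟨by positivity, by rw [hα'_def]; linarith⟩, C, by positivity, ?_⟩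
  intro x y r hr hball hdist
  set c : EuclideanSpace ℝ (Fin n) := y - x with hc_def
  have hcn : ‖c‖ + c₀ * r ≤ r := by
    rw [hc_def]; rw [dist_eq_norm] at hdist; exact hdist
  have hcr : ‖c‖ ≤ r := by have := mul_pos hc₀ hr; linarith
  set t : ℝ := s * r with ht_def
  have ht : 0 < t := by positivity
  obtain ⟨m, hmc, hmdet⟩ := exists_good_frame t ht c
  set T : Set (Fin n → EuclideanSpace ℝ (Fin n)) :=
    Set.pi Set.univ (fun i => closedBall (m i) (η * r)) with hT_def
  have hTsub : T ⊆ WsetX U x r α' := by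
    intro w hw
    have hwi : ∀ i, ‖w i - m i‖ ≤ η * r := by
      intro i
      have := hw i (Set.mem_univ i)
      rwa [mem_closedBall, dist_eq_norm] at this
    have hηrs : η * r ≤ s * r := mul_le_mul_of_nonneg_right hηs hr.le
    have hst : s * r + s * r = c₀ * r := by rw [hs_def]; ring
    have hwc : ∀ i, ‖w i - c‖ ≤ c₀ * r := by
      intro i
      have h1 : dist (w i) c ≤ dist (w i) (m i) + dist (m i) c := dist_triangle _ _ _
      simp only [dist_eq_norm] at h1
      rw [hmc i] at h1
      have h2 := hwi i
      rw [ht_def] at h1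
      linarith
    constructor
    · intro i
      constructor
      · rw [mem_closedBall_zero_iff]
        calc ‖w i‖ ≤ ‖w i - c‖ + ‖c‖ := by
              simpa using norm_add_le (w i - c) c
          _ ≤ c₀ * r + ‖c‖ := by linarith [hwc i]
          _ ≤ r := by linarith
      · apply hball
        rw [mem_closedBall, dist_eq_norm]
        have : x + w i - y = w i - c := by rw [hc_def]; abel
        rw [this]
        exact hwc i
    · -- determinant bound
      have hdet_eq : (Matrix.of fun i j => w j i).det = detCMM n w := by
        rw [detCMM_apply]
        rw [← Matrix.det_transpose]
        congr 1
      rw [hdet_eq]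
      rcases Nat.eq_zero_or_pos n with hn | hn
      · subst hn
        have : detCMM 0 w = (Matrix.of fun i j => w i j).det := detCMM_apply w
        rw [this, Matrix.det_isEmpty]
        simp [hα'_def]
        norm_num
      -- n ≥ 1
      have hmn : ‖m - (fun i => c)‖ ≤ t := by
        rw [pi_norm_le_iff_of_nonneg ht.le]
        intro i
        simpa using (hmc i).le
      have hm_norm : ‖m‖ ≤ 3 * r := by
        rw [pi_norm_le_iff_of_nonneg (by positivity)]
        intro i
        have : ‖m i‖ ≤ ‖m i - c‖ + ‖c‖ := by simpa using norm_add_le (m i - c) c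
        rw [hmc i] at this
        have hts : t ≤ r / 4 := by
          have := mul_le_mul_of_nonneg_right hs4 hr.le
          rw [ht_def]; linarith
        linarith
      have hw_norm : ‖w‖ ≤ 3 * r := by
        rw [pi_norm_le_iff_of_nonneg (by positivity)]
        intro i
        have h1 : ‖w i‖ ≤ ‖w i - m i‖ + ‖m i‖ := by simpa using norm_add_le (w i - m i) (m i)
        have h2 : ‖m i‖ ≤ ‖m i - c‖ + ‖c‖ := by simpa using norm_add_le (m i - c) c
        rw [hmc i] at h2
        have h3 : η * r ≤ r / 4 := by
          have := mul_le_mul_of_nonneg_right (hηs.trans hs4) hr.le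
          linarith
        have hts : t ≤ r / 4 := by
          have := mul_le_mul_of_nonneg_right hs4 hr.le
          rw [ht_def]; linarith
        linarith [hwi i]
      have hwm_norm : ‖w - m‖ ≤ η * r := by
        rw [pi_norm_le_iff_of_nonneg (by positivity)]
        intro i
        exact hwi i
      have hsub := (detCMM n).norm_image_sub_le w m
      have hfnorm := detCMM_norm_le (n := n)
      have hcard : (Fintype.card (Fin n) : ℝ) = (n : ℝ) := by simp
      have hmax : max ‖w‖ ‖m‖ ≤ 3 * r := max_le hw_norm hm_norm
      have hmax0 : (0:ℝ) ≤ max ‖w‖ ‖m‖ := le_max_of_le_left (norm_nonneg _)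
      have hbound : ‖detCMM n w - detCMM n m‖ ≤ K * n * (3 * r) ^ (n - 1) * (η * r) := by
        calc ‖detCMM n w - detCMM n m‖
            ≤ ‖detCMM n‖ * (Fintype.card (Fin n)) * max ‖w‖ ‖m‖ ^ (Fintype.card (Fin n) - 1) * ‖w - m‖ :=
              hsub
          _ ≤ K * n * (3 * r) ^ (n - 1) * (η * r) := by
              simp only [Fintype.card_fin]
              have h1 : max ‖w‖ ‖m‖ ^ (n-1) ≤ (3*r) ^ (n-1) :=
                pow_le_pow_left₀ hmax0 hmax _
              have hηr : (0:ℝ) ≤ η * r := by positivity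
              have := mul_le_mul (mul_le_mul (mul_le_mul hfnorm (le_refl (n:ℝ))
                (Nat.cast_nonneg n) hK0) h1 (pow_nonneg hmax0 _) (by positivity))
                hwm_norm (norm_nonneg _) (by positivity)
              exact this
      have hpow : (3 * r) ^ (n - 1) * (η * r) = 3 ^ (n-1) * η * r ^ n := by
        rw [mul_pow]
        have h : r ^ (n - 1) * r = r ^ n := by
          rw [← pow_succ]
          congr 1
          omega
        calc 3^(n-1) * r^(n-1) * (η * r) = 3^(n-1) * η * (r^(n-1) * r) := by ring
          _ = 3^(n-1) * η * r^n := by rw [h]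
      have hdm : detCMM n m = (Matrix.of fun i j => m i j).det := detCMM_apply m
      have e1 : t ^ n ≤ |detCMM n m| := by rw [hdm]; exact hmdet
      have e2 : ‖detCMM n w - detCMM n m‖ ≤ K * (n:ℝ) * (3^(n-1) * η * r^n) := by
        rw [← hpow, ← mul_assoc]
        exact hbound
      have e3 : K * (n:ℝ) * (3^(n-1) * η * r^n) = A * η * r^n := by rw [hA_def]; ring
      have e4 : A * η * r ^ n ≤ α' * r ^ n :=
        mul_le_mul_of_nonneg_right hAη (pow_nonneg hr.le n)
      have e5 : t ^ n = s ^ n * r ^ n := mul_pow s r n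
      have e7 : |detCMM n m| - |detCMM n w| ≤ |detCMM n m - detCMM n w| :=
        abs_sub_abs_le_abs_sub _ _
      have e7' : |detCMM n m - detCMM n w| = ‖detCMM n w - detCMM n m‖ := by
        rw [Real.norm_eq_abs, abs_sub_comm]
      have e8 : s ^ n * r ^ n = α' * r ^ n + α' * r ^ n := by rw [hα'_def]; ring
      linarith
  -- volume computation
  have hvol_ne_top : volume (ball (0 : EuclideanSpace ℝ (Fin n)) 1) ≠ ⊤ :=
    measure_ball_lt_top.ne
  have hofB : ENNReal.ofReal B = volume (ball (0 : EuclideanSpace ℝ (Fin n)) 1) := by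
    rw [hB_def]; exact ENNReal.ofReal_toReal hvol_ne_top
  have hball_vol : ∀ i : Fin n, volume (closedBall (m i) (η * r))
      = ENNReal.ofReal ((η * r) ^ n) * volume (ball (0 : EuclideanSpace ℝ (Fin n)) 1) := by
    intro i
    rw [Measure.addHaar_closedBall _ _ (by positivity : (0:ℝ) ≤ η * r)]
    rw [finrank_euclideanSpace_fin (𝕜 := ℝ)]
  have hceq : C * r ^ (n ^ 2) = ((η * r) ^ n * B) ^ n := by
    have h2 : r ^ (n ^ 2) = (r ^ n) ^ n := by
      rw [← pow_mul]
      congr 1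
      ring
    rw [hC_def, h2, mul_pow η r]
    ring
  calc ENNReal.ofReal (C * r ^ (n ^ 2))
      = (ENNReal.ofReal ((η * r) ^ n) * volume (ball (0 : EuclideanSpace ℝ (Fin n)) 1)) ^ n := by
        rw [hceq, ENNReal.ofReal_pow (by positivity), ENNReal.ofReal_mul (by positivity), hofB]
    _ = volume T := by
        rw [hT_def, volume_pi_pi]
        rw [Finset.prod_congr rfl fun i _ => hball_vol i, Finset.prod_const, Finset.card_univ,
          Fintype.card_fin]
    _ ≤ volume (WsetX U x r α') := measure_mono hTsub

end VolWsetAux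

/-- For `U` open bounded with the cone condition, or `U = ℝ^n`, there are `α̃ ∈ (0,1)`
and `C > 0` with `H^{n²}(W^x_{r,α̃}) ≥ C·r^{n²}` for all `x ∈ U`, `0 < r < diam U`. -/
theorem volume_WsetX_ge {n : ℕ} (U : Set (EuclideanSpace ℝ (Fin n)))
    (hU : (IsOpen U ∧ Bornology.IsBounded U ∧ ConeCondition U) ∨ U = Set.univ) :
    ∃ α' : ℝ, α' ∈ Set.Ioo (0 : ℝ) 1 ∧ ∃ C : ℝ, 0 < C ∧
      ∀ x ∈ U, ∀ r : ℝ, 0 < r → ENNReal.ofReal r < EMetric.diam U →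
        ENNReal.ofReal (C * r ^ (n ^ 2)) ≤ volume (WsetX U x r α') := by
  obtain ⟨c₀, hc₀, hc₀', hgeom⟩ := VolWsetAux.geom U hU
  obtain ⟨α', hα', C, hC, hcore⟩ := VolWsetAux.core U c₀ hc₀ hc₀'
  refine ⟨α', hα', C, hC, ?_⟩
  intro x hx r hr hrd
  obtain ⟨y, hy1, hy2⟩ := hgeom x hx r hr hrd
  exact hcore x y r hr hy1 hy2
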